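/- Let Σ be a forward-complete control system on ℝⁿ with input set 𝖴 = ⋃_{j=1}^J ∏_{i=1}^m [a_i^j, b_i^j] ⊆ ℝᵐ (a_i^j < b_i^j), and suppose Σ is incrementally forward complete with bounding functions β, γ. Let q = (τ, η, μ, θ) be quantization parameters with τ, η, μ, θ > 0, let ε > 0 be a precision, and assume μ ≤ μ̂ := min_j min_i (b_i^j − a_i^j) and η ≤ ε ≤ θ. Then the relation R = {(x, x_q) ∈ ℝⁿ × [ℝⁿ]_η : ‖x − x_q‖ ≤ ε} is an ε-approximate simulation relation from S_τ(Σ) to S_q(Σ); in particular S_τ(Σ) ⪯_S^ε S_q(Σ). -/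
import Mathlib


open Set

/-- A class `𝒦∞` function `ℝ≥0 → ℝ≥0`, encoded as a function `ℝ → ℝ` restricted to `[0,∞)`:
continuous, strictly increasing, vanishing at `0`, and tending to `∞`. -/
def IsKInf (g : ℝ → ℝ) : Prop :=
  ContinuousOn g (Set.Ici 0) ∧ StrictMonoOn g (Set.Ici 0) ∧ g 0 = 0 ∧
    Filter.Tendsto g Filter.atTop Filter.atTop

/-- A (metric) system: states `X`, inputs `U`, a transition relation, and an output map into
a metric space `Y`. -/
structure Sys (X U Y : Type*) [MetricSpace Y] where
  trans : X → U → X → Prop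
  out : X → Y

/-- `R` is an `ε`-approximate simulation relation from `Sa` to `Sb`. -/
def IsApproxSim {X₁ U₁ X₂ U₂ Y : Type*} [MetricSpace Y]
    (Sa : Sys X₁ U₁ Y) (Sb : Sys X₂ U₂ Y) (ε : ℝ) (R : X₁ → X₂ → Prop) : Prop :=
  (∀ xa, ∃ xb, R xa xb) ∧
  (∀ xa xb, R xa xb → dist (Sa.out xa) (Sb.out xb) ≤ ε) ∧
  (∀ xa xb, R xa xb → ∀ ua xa', Sa.trans xa ua xa' →
    ∃ ub xb', Sb.trans xb ub xb' ∧ R xa' xb')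

/-- Let `Σ` be a `δ`-FC control system (trajectories `traj x u t = ξ_{xu}(t)`
under constant inputs, bounding functions `β, γ`) with input set
`𝖴 = ⋃ⱼ ∏ᵢ [aᵢʲ, bᵢʲ]`.  For quantization parameters `q = (τ,η,μ,θ)` and precision `ε > 0`
with `μ ≤ μ̂` and `η ≤ ε ≤ θ`, the relation
`R = {(x, x_q) : ‖x − x_q‖ ≤ ε}` is an `ε`-approximate simulation relation from `S_τ(Σ)`
(states `ℝⁿ`, inputs `𝖴`, transitions `x →ᵘ ξ_{xu}(τ)`, identity output) to `S_q(Σ)`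
(states `[ℝⁿ]_η`, inputs `[𝖴]_μ`, transitions
`x_q →^{u_q} x_q'` iff `‖ξ_{x_q u_q}(τ) − x_q'‖ ≤ β(θ,τ)+γ(μ,τ)+η`, output the inclusion);
in particular `S_τ(Σ) ⪯_S^ε S_q(Σ)`. -/
theorem Stau_approx_simulated_by_Sq {n mdim : ℕ}
    (U : Set (Fin mdim → ℝ))
    (J : ℕ) (hJ : 0 < J) (a b : Fin J → (Fin mdim → ℝ))
    (hab : ∀ j i, a j i < b j i)
    (hU : U = ⋃ j, Set.Icc (a j) (b j))
    (traj : (Fin n → ℝ) → (Fin mdim → ℝ) → ℝ → (Fin n → ℝ))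
    (htraj0 : ∀ x u, traj x u 0 = x)
    (β γ : ℝ → ℝ → ℝ)
    (hβc : Continuous (Function.uncurry β)) (hγc : Continuous (Function.uncurry γ))
    (hβK : ∀ s > (0:ℝ), IsKInf (fun r => β r s))
    (hγK : ∀ s > (0:ℝ), IsKInf (fun r => γ r s))
    (hFC : ∀ (x x' : Fin n → ℝ), ∀ u ∈ U, ∀ u' ∈ U, ∀ t ≥ (0:ℝ),
      ‖traj x u t - traj x' u' t‖ ≤ β ‖x - x'‖ t + γ ‖u - u'‖ t)
    (τ η μ θ ε : ℝ)
    (hτ : 0 < τ) (hη : 0 < η) (hμ : 0 < μ) (hθ : 0 < θ) (hε : 0 < ε)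
    (hμhat : ∀ j i, μ ≤ b j i - a j i)
    (hηε : η ≤ ε) (hεθ : ε ≤ θ) :
    IsApproxSim
      -- `S_τ(Σ)`
      (⟨fun x (u : {u : Fin mdim → ℝ // u ∈ U}) x' => x' = traj x u.1 τ, id⟩ :
        Sys (Fin n → ℝ) {u : Fin mdim → ℝ // u ∈ U} (Fin n → ℝ))
      -- `S_q(Σ)`
      (⟨fun xq (uq : {u : Fin mdim → ℝ // u ∈ U ∧ ∀ i, ∃ k : ℤ, u i = k * μ}) xq' =>
          ‖traj xq.1 uq.1 τ - xq'.1‖ ≤ β θ τ + γ μ τ + η,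
        fun xq => xq.1⟩ :
        Sys {p : Fin n → ℝ // ∀ i, ∃ k : ℤ, p i = k * η}
            {u : Fin mdim → ℝ // u ∈ U ∧ ∀ i, ∃ k : ℤ, u i = k * μ} (Fin n → ℝ))
      ε
      (fun x xq => ‖x - xq.1‖ ≤ ε) := by
  obtain ⟨-, hβm, hβ0, -⟩ := hβK τ hτ
  obtain ⟨-, hγm, hγ0, -⟩ := hγK τ hτ
  have hβmono : ∀ s t : ℝ, 0 ≤ s → s ≤ t → β s τ ≤ β t τ := fun s t hs hst =>
    hβm.monotoneOn (Set.mem_Ici.2 hs) (Set.mem_Ici.2 (hs.trans hst)) hst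
  have hγmono : ∀ s t : ℝ, 0 ≤ s → s ≤ t → γ s τ ≤ γ t τ := fun s t hs hst =>
    hγm.monotoneOn (Set.mem_Ici.2 hs) (Set.mem_Ici.2 (hs.trans hst)) hst
  have hβnn : 0 ≤ β θ τ := by
    have := hβmono 0 θ le_rfl hθ.le; simpa [hβ0] using this
  have hγnn : 0 ≤ γ μ τ := by
    have := hγmono 0 μ le_rfl hμ.le; simpa [hγ0] using this
  have hround : ∀ (c : ℝ), 0 < c → ∀ x : ℝ, (⌊x/c⌋ : ℝ) * c ≤ x ∧ x - (⌊x/c⌋:ℝ) * c ≤ c := by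
    intro c hc x
    constructor
    · exact (le_div_iff₀ hc).1 (Int.floor_le _)
    · have h := Int.lt_floor_add_one (x / c)
      have : x < ((⌊x/c⌋ : ℝ) + 1) * c := (div_lt_iff₀ hc).1 h
      nlinarith
  refine ⟨?_, ?_, ?_⟩
  · intro x
    refine ⟨⟨fun i => (⌊x i / η⌋ : ℝ) * η, fun i => ⟨⌊x i / η⌋, rfl⟩⟩, ?_⟩
    show ‖x - fun i => (⌊x i / η⌋ : ℝ) * η‖ ≤ ε
    rw [pi_norm_le_iff_of_nonneg hε.le]
    intro i
    have h := hround η hη (x i)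
    rw [Real.norm_eq_abs, abs_le]
    constructor
    · simp only [Pi.sub_apply]; linarith
    · simp only [Pi.sub_apply]; linarith
  · intro x xq hR
    simpa [dist_eq_norm] using hR
  · intro x xq hR u x' hx'
    have huU : u.1 ∈ ⋃ j, Set.Icc (a j) (b j) := by rw [← hU]; exact u.2
    obtain ⟨j, hj⟩ := Set.mem_iUnion.1 huU
    obtain ⟨hja, hjb⟩ := Set.mem_Icc.1 hj
    -- quantized input
    set uq : Fin mdim → ℝ := fun i =>
      if a j i ≤ (⌊u.1 i / μ⌋ : ℝ) * μ then (⌊u.1 i / μ⌋ : ℝ) * μ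
      else ((⌊u.1 i / μ⌋ : ℝ) + 1) * μ with huq
    have huq_props : ∀ i, a j i ≤ uq i ∧ uq i ≤ b j i ∧ |u.1 i - uq i| ≤ μ := by
      intro i
      have h := hround μ hμ (u.1 i)
      have hai := hja i
      have hbi := hjb i
      have hm := hμhat j i
      by_cases hc : a j i ≤ (⌊u.1 i / μ⌋ : ℝ) * μ
      · simp only [huq, if_pos hc]
        refine ⟨hc, h.1.trans hbi, ?_⟩
        rw [abs_le]; constructor <;> linarith [h.1, h.2]
      · simp only [huq, if_neg hc]
        push_neg at hc
        refine ⟨?_, ?_, ?_⟩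
        · nlinarith [h.2]
        · nlinarith [h.1]
        · rw [abs_le]; constructor <;> nlinarith [h.1, h.2]
    have huqU : uq ∈ U := by
      rw [hU]
      exact Set.mem_iUnion.2 ⟨j, Set.mem_Icc.2 ⟨fun i => (huq_props i).1,
        fun i => (huq_props i).2.1⟩⟩
    have huqgrid : ∀ i, ∃ k : ℤ, uq i = (k : ℝ) * μ := by
      intro i
      by_cases hc : a j i ≤ (⌊u.1 i / μ⌋ : ℝ) * μ
      · exact ⟨⌊u.1 i / μ⌋, by simp [huq, if_pos hc]⟩
      · exact ⟨⌊u.1 i / μ⌋ + 1, by simp [huq, if_neg hc]⟩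
    have hunorm : ‖u.1 - uq‖ ≤ μ := by
      rw [pi_norm_le_iff_of_nonneg hμ.le]
      intro i
      simpa [Real.norm_eq_abs] using (huq_props i).2.2
    -- quantized next state: round x' = traj x u τ
    set xq' : Fin n → ℝ := fun i => (⌊traj x u.1 τ i / η⌋ : ℝ) * η with hxq'
    have hxq'grid : ∀ i, ∃ k : ℤ, xq' i = (k : ℝ) * η := fun i => ⟨_, rfl⟩
    have hx'near : ‖traj x u.1 τ - xq'‖ ≤ η := by
      rw [pi_norm_le_iff_of_nonneg hη.le]
      intro i
      have h := hround η hη (traj x u.1 τ i)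
      rw [Pi.sub_apply, Real.norm_eq_abs, abs_le]
      simp only [hxq']
      constructor <;> [linarith [h.1]; linarith [h.2]]
    have hFCapp : ‖traj xq.1 uq τ - traj x u.1 τ‖ ≤ β θ τ + γ μ τ := by
      have h := hFC xq.1 x uq huqU u.1 u.2 τ hτ.le
      have h1 : β ‖xq.1 - x‖ τ ≤ β θ τ := by
        have : ‖xq.1 - x‖ ≤ θ := by
          rw [show xq.1 - x = -(x - xq.1) by ring, norm_neg]
          exact hR.trans (hεθ)
        exact hβmono _ _ (norm_nonneg _) this
      have h2 : γ ‖uq - u.1‖ τ ≤ γ μ τ := by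
        have : ‖uq - u.1‖ ≤ μ := by
          rw [show uq - u.1 = -(u.1 - uq) by ring, norm_neg]; exact hunorm
        exact hγmono _ _ (norm_nonneg _) this
      linarith
    refine ⟨⟨uq, huqU, huqgrid⟩, ⟨xq', hxq'grid⟩, ?_, ?_⟩
    · show ‖traj xq.1 uq τ - xq'‖ ≤ β θ τ + γ μ τ + η
      calc ‖traj xq.1 uq τ - xq'‖
          ≤ ‖traj xq.1 uq τ - traj x u.1 τ‖ + ‖traj x u.1 τ - xq'‖ :=
            norm_sub_le_norm_sub_add_norm_sub _ _ _
        _ ≤ (β θ τ + γ μ τ) + η := add_le_add hFCapp hx'near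
        _ = β θ τ + γ μ τ + η := by ring
    · show ‖x' - xq'‖ ≤ ε
      rw [hx']
      exact hx'near.trans (hηε)
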